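/- arXiv:2406.17331 — 2 statements merged into one kernel-verified Lean document; each statement's English description precedes it below -/
import Mathlib

section
/- The number of semi-standard Young tableaux of shape k×2 (two columns of length k, i.e., pairs of weakly increasing comparable k-subsets) with entries in {1,...,n} equals ((n+1)(n-k+1)/(k+1)) · ∏_{i=0}^{k-2} (n-i)²/(k-i)². -/
open Finset

namespace SSYT2
variable {n : ℕ}

/-- prefix count -/
def F (A : Finset (Fin n)) (m : ℕ) : ℕ := (A.filter (fun x => x.val ≤ m)).card

lemma F_mono (A : Finset (Fin n)) {m m' : ℕ} (h : m ≤ m') : F A m ≤ F A m' := by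
  apply card_le_card
  intro x hx
  simp only [mem_filter] at hx ⊢
  exact ⟨hx.1, le_trans hx.2 h⟩

lemma F_le_card (A : Finset (Fin n)) (m : ℕ) : F A m ≤ A.card :=
  card_le_card (filter_subset _ _)

lemma F_eq_card (A : Finset (Fin n)) {m : ℕ} (h : n ≤ m + 1) : F A m = A.card := by
  unfold F
  rw [filter_true_of_mem (fun x _ => Nat.le_of_lt_succ (lt_of_lt_of_le x.isLt h))]

lemma F_succ_le (A : Finset (Fin n)) (m : ℕ) : F A (m + 1) ≤ F A m + 1 := by
  unfold F
  have hsub : A.filter (fun x => x.val ≤ m + 1) ⊆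
      A.filter (fun x => x.val ≤ m) ∪ A.filter (fun x => x.val = m + 1) := by
    intro x hx
    simp only [mem_filter, mem_union] at hx ⊢
    rcases Nat.lt_or_ge x.val (m+1) with h | h
    · exact Or.inl ⟨hx.1, Nat.lt_succ_iff.mp h⟩
    · exact Or.inr ⟨hx.1, le_antisymm hx.2 h⟩
  have h1 : (A.filter (fun x => x.val = m + 1)).card ≤ 1 := by
    apply card_le_one.mpr
    intro a ha b hb
    simp only [mem_filter] at ha hb
    exact Fin.val_injective (ha.2.trans hb.2.symm)
  calc (A.filter (fun x => x.val ≤ m + 1)).card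
      ≤ _ := card_le_card hsub
    _ ≤ _ + _ := card_union_le _ _
    _ ≤ (A.filter (fun x => x.val ≤ m)).card + 1 := by omega

lemma F_zero_le (A : Finset (Fin n)) : F A 0 ≤ 1 := by
  apply card_le_one.mpr
  intro a ha b hb
  simp only [mem_filter, Nat.le_zero] at ha hb
  exact Fin.val_injective (ha.2.trans hb.2.symm)

/-- at the minimal violation, the gap is exactly 1 -/
lemma find_gap (A B : Finset (Fin n)) (h : ∃ m, F A m < F B m) :
    F B (Nat.find h) = F A (Nat.find h) + 1 := by
  set τ := Nat.find h with hτ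
  have hspec : F A τ < F B τ := Nat.find_spec h
  rcases Nat.eq_zero_or_eq_succ_pred τ with h0 | hs
  · rw [h0] at hspec ⊢
    have := F_zero_le (n := n) B
    omega
  · set t := τ - 1 with ht
    have hmin : ¬ (F A t < F B t) := Nat.find_min h (by omega)
    have h1 : F B τ ≤ F B t + 1 := by rw [hs]; exact F_succ_le B t
    have h2 : F A t ≤ F A τ := F_mono A (by omega)
    omega

/-- the tail swap -/
def sw (τ : ℕ) (p : Finset (Fin n) × Finset (Fin n)) : Finset (Fin n) × Finset (Fin n) :=
  (p.1.filter (fun x => x.val ≤ τ) ∪ p.2.filter (fun x => ¬ x.val ≤ τ),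
   p.2.filter (fun x => x.val ≤ τ) ∪ p.1.filter (fun x => ¬ x.val ≤ τ))

lemma aux_lo (τ : ℕ) (A B : Finset (Fin n)) :
    (A.filter (fun x => x.val ≤ τ) ∪ B.filter (fun x => ¬ x.val ≤ τ)).filter
      (fun x => x.val ≤ τ) = A.filter (fun x => x.val ≤ τ) := by
  ext x
  simp only [mem_filter, mem_union]
  tauto

lemma aux_hi (τ : ℕ) (A B : Finset (Fin n)) :
    (A.filter (fun x => x.val ≤ τ) ∪ B.filter (fun x => ¬ x.val ≤ τ)).filter
      (fun x => ¬ x.val ≤ τ) = B.filter (fun x => ¬ x.val ≤ τ) := by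
  ext x
  simp only [mem_filter, mem_union]
  tauto

lemma sw_sw (τ : ℕ) (p : Finset (Fin n) × Finset (Fin n)) : sw τ (sw τ p) = p := by
  unfold sw
  ext x <;> simp only [mem_filter, mem_union] <;> tauto

lemma F_sw_fst (τ : ℕ) (p : Finset (Fin n) × Finset (Fin n)) {m : ℕ} (h : m ≤ τ) :
    F (sw τ p).1 m = F p.1 m := by
  unfold F sw
  congr 1
  ext x
  simp only [mem_filter, mem_union]
  constructor
  · rintro ⟨(⟨h1, _⟩ | ⟨_, h2⟩), h3⟩
    · exact ⟨h1, h3⟩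
    · omega
  · rintro ⟨h1, h3⟩
    exact ⟨Or.inl ⟨h1, le_trans h3 h⟩, h3⟩

lemma F_sw_snd (τ : ℕ) (p : Finset (Fin n) × Finset (Fin n)) {m : ℕ} (h : m ≤ τ) :
    F (sw τ p).2 m = F p.2 m := by
  have := F_sw_fst τ (p.2, p.1) h
  unfold F sw at this ⊢
  exact this

lemma card_sw_fst (τ : ℕ) (p : Finset (Fin n) × Finset (Fin n)) :
    (sw τ p).1.card = F p.1 τ + (p.2.card - F p.2 τ) := by
  unfold sw F
  rw [card_union_of_disjoint]
  · congr 1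
    have := card_filter_add_card_filter_not (s := p.2) (p := fun x : Fin n => x.val ≤ τ)
    omega
  · rw [disjoint_left]
    intro x hx hx2
    simp only [mem_filter] at hx hx2
    exact hx2.2 hx.2

lemma card_sw_snd (τ : ℕ) (p : Finset (Fin n) × Finset (Fin n)) :
    (sw τ p).2.card = F p.2 τ + (p.1.card - F p.1 τ) := by
  have := card_sw_fst τ (p.2, p.1)
  unfold sw F at this ⊢
  exact this

/-- violation predicate -/
def V (p : Finset (Fin n) × Finset (Fin n)) : Prop := ∃ m, F p.1 m < F p.2 m

lemma V_sw (p : Finset (Fin n) × Finset (Fin n)) (hV : V p) : V (sw (Nat.find hV) p) := by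
  refine ⟨Nat.find hV, ?_⟩
  rw [F_sw_fst _ _ le_rfl, F_sw_snd _ _ le_rfl]
  exact Nat.find_spec hV

lemma find_V_sw (p : Finset (Fin n) × Finset (Fin n)) (hV : V p)
    (h' : V (sw (Nat.find hV) p)) : Nat.find h' = Nat.find hV := by
  apply le_antisymm
  · apply Nat.find_le
    rw [F_sw_fst _ _ le_rfl, F_sw_snd _ _ le_rfl]
    exact Nat.find_spec hV
  · by_contra hlt
    push_neg at hlt
    have hm := Nat.find_spec h'
    rw [F_sw_fst _ _ (le_of_lt hlt), F_sw_snd _ _ (le_of_lt hlt)] at hm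
    exact Nat.find_min hV hlt hm

lemma card_refl_fst (p : Finset (Fin n) × Finset (Fin n)) (hV : V p) :
    (sw (Nat.find hV) p).1.card = p.2.card - 1 := by
  have h1 := card_sw_fst (Nat.find hV) p
  have h2 := find_gap p.1 p.2 hV
  have h3 := F_le_card p.2 (Nat.find hV)
  omega

lemma card_refl_snd (p : Finset (Fin n) × Finset (Fin n)) (hV : V p) :
    (sw (Nat.find hV) p).2.card = p.1.card + 1 := by
  have h1 := card_sw_snd (Nat.find hV) p
  have h2 := find_gap p.1 p.2 hV
  have h3 := F_le_card p.1 (Nat.find hV)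
  have h4 := F_le_card p.2 (Nat.find hV)
  omega

lemma V_of_cards {p : Finset (Fin n) × Finset (Fin n)} (h : p.1.card < p.2.card) : V p :=
  ⟨n, by rw [F_eq_card _ (Nat.le_succ n), F_eq_card _ (Nat.le_succ n)]; exact h⟩

/-- the reflection bijection -/
noncomputable def reflEquiv (k : ℕ) (hk : 1 ≤ k) :
    {p : Finset (Fin n) × Finset (Fin n) // p.1.card = k ∧ p.2.card = k ∧ V p} ≃
    {p : Finset (Fin n) × Finset (Fin n) // p.1.card = k - 1 ∧ p.2.card = k + 1} where
  toFun q := ⟨sw (Nat.find q.2.2.2) q.1, by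
    rw [card_refl_fst _ q.2.2.2, card_refl_snd _ q.2.2.2, q.2.1, q.2.2.1]
    exact ⟨rfl, rfl⟩⟩
  invFun q := ⟨sw (Nat.find (V_of_cards (by omega : q.1.1.card < q.1.2.card))) q.1, by
    have hV : V q.1 := V_of_cards (by omega)
    refine ⟨?_, ?_, V_sw _ hV⟩
    · rw [card_refl_fst _ hV, q.2.2]; omega
    · rw [card_refl_snd _ hV, q.2.1]; omega⟩
  left_inv q := by
    apply Subtype.ext
    dsimp only
    have hV : V q.1 := q.2.2.2
    have hV' : V (sw (Nat.find hV) q.1) := V_sw _ hV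
    have : Nat.find (V_of_cards (p := sw (Nat.find hV) q.1) (by
        rw [card_refl_fst _ hV, card_refl_snd _ hV, q.2.1, q.2.2.1]; omega)) = Nat.find hV :=
      find_V_sw _ hV _
    rw [this, sw_sw]
  right_inv q := by
    apply Subtype.ext
    dsimp only
    rw [find_V_sw q.1 (V_of_cards (by omega)), sw_sw]

lemma F_image {k : ℕ} (a : Fin k → Fin n) (ha : Function.Injective a) (m : ℕ) :
    F (univ.image a) m = (univ.filter fun i => (a i).val ≤ m).card := by
  unfold F
  rw [Finset.filter_image, card_image_of_injective _ ha]

lemma dom_iff {k : ℕ} (a b : Fin k → Fin n) (ha : StrictMono a) (hb : StrictMono b) :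
    (∀ i, a i ≤ b i) ↔ ∀ m, F (univ.image b) m ≤ F (univ.image a) m := by
  constructor
  · intro h m
    rw [F_image a ha.injective, F_image b hb.injective]
    apply card_le_card
    intro j hj
    simp only [mem_filter, mem_univ, true_and] at hj ⊢
    exact le_trans (Fin.le_def.mp (h j)) hj
  · intro h i
    by_contra hcon
    push_neg at hcon
    have h1 : (i : ℕ) + 1 ≤ F (univ.image b) (b i).val := by
      rw [F_image b hb.injective]
      calc (i : ℕ) + 1 = (Finset.Iic i).card := (Fin.card_Iic i).symm
        _ ≤ _ := card_le_card (fun j hj => by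
            simp only [mem_Iic] at hj
            simp only [mem_filter, mem_univ, true_and]
            exact Fin.le_def.mp (hb.monotone hj))
    have h2 : F (univ.image a) (b i).val ≤ (i : ℕ) := by
      rw [F_image a ha.injective]
      calc _ ≤ (Finset.Iio i).card := card_le_card (fun j hj => by
            simp only [mem_filter, mem_univ, true_and] at hj
            simp only [mem_Iio]
            exact ha.lt_iff_lt.mp (lt_of_le_of_lt (Fin.le_def.mpr hj) hcon))
        _ = (i : ℕ) := Fin.card_Iio i
    have := h (b i).val
    omega

lemma image_univ_orderEmbOfFin {k : ℕ} (s : Finset (Fin n)) (h : s.card = k) :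
    univ.image (s.orderEmbOfFin h) = s := by
  rw [← coe_inj, coe_image, coe_univ, Set.image_univ]
  exact range_orderEmbOfFin s h

/-- main bridge equiv -/
noncomputable def mainEquiv (k : ℕ) :
    {p : (Fin k → Fin n) × (Fin k → Fin n) //
        StrictMono p.1 ∧ StrictMono p.2 ∧ ∀ i, p.1 i ≤ p.2 i} ≃
    {q : Finset (Fin n) × Finset (Fin n) // q.1.card = k ∧ q.2.card = k ∧ ¬ V q} where
  toFun p := ⟨(univ.image p.1.1, univ.image p.1.2), by
    obtain ⟨h1, h2, h3⟩ := p.2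
    refine ⟨?_, ?_, ?_⟩
    · rw [card_image_of_injective _ h1.injective, card_univ, Fintype.card_fin]
    · rw [card_image_of_injective _ h2.injective, card_univ, Fintype.card_fin]
    · intro hV
      obtain ⟨m, hm⟩ := hV
      exact absurd hm (not_lt.mpr (((dom_iff _ _ h1 h2).mp h3) m))⟩
  invFun q := ⟨(orderEmbOfFin q.1.1 q.2.1, orderEmbOfFin q.1.2 q.2.2.1), by
    refine ⟨(orderEmbOfFin q.1.1 q.2.1).strictMono, (orderEmbOfFin q.1.2 q.2.2.1).strictMono, ?_⟩
    apply (dom_iff _ _ (orderEmbOfFin q.1.1 q.2.1).strictMono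
        (orderEmbOfFin q.1.2 q.2.2.1).strictMono).mpr
    intro m
    rw [image_univ_orderEmbOfFin, image_univ_orderEmbOfFin]
    have := q.2.2.2
    unfold V at this
    push_neg at this
    exact this m⟩
  left_inv p := by
    apply Subtype.ext
    obtain ⟨h1, h2, h3⟩ := p.2
    have e1 := orderEmbOfFin_unique (f := p.1.1)
      (by rw [card_image_of_injective _ h1.injective, card_univ, Fintype.card_fin])
      (fun x => mem_image_of_mem _ (mem_univ x)) h1
    have e2 := orderEmbOfFin_unique (f := p.1.2)
      (by rw [card_image_of_injective _ h2.injective, card_univ, Fintype.card_fin])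
      (fun x => mem_image_of_mem _ (mem_univ x)) h2
    exact Prod.ext (funext fun i => (congrFun e1 i).symm) (funext fun i => (congrFun e2 i).symm)
  right_inv q := by
    apply Subtype.ext
    exact Prod.ext (image_univ_orderEmbOfFin _ _) (image_univ_orderEmbOfFin _ _)

lemma card_pairs (j l : ℕ) :
    Nat.card {p : Finset (Fin n) × Finset (Fin n) // p.1.card = j ∧ p.2.card = l} =
      n.choose j * n.choose l := by
  rw [Nat.card_congr (Equiv.subtypeProdEquivProd (p := fun s : Finset (Fin n) => s.card = j)
      (q := fun s : Finset (Fin n) => s.card = l)), Nat.card_prod,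
    Nat.card_eq_fintype_card, Nat.card_eq_fintype_card, Fintype.card_finset_len,
    Fintype.card_finset_len, Fintype.card_fin]

open Classical in
lemma card_split (k : ℕ) :
    Nat.card {p : Finset (Fin n) × Finset (Fin n) // p.1.card = k ∧ p.2.card = k ∧ ¬ V p} +
    Nat.card {p : Finset (Fin n) × Finset (Fin n) // p.1.card = k ∧ p.2.card = k ∧ V p} =
      n.choose k * n.choose k := by
  have e1 : {p : Finset (Fin n) × Finset (Fin n) // p.1.card = k ∧ p.2.card = k ∧ ¬ V p} ≃
      {x : {p : Finset (Fin n) × Finset (Fin n) // p.1.card = k ∧ p.2.card = k} // ¬ V x.1} :=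
    ((Equiv.subtypeSubtypeEquivSubtypeInter
        (fun p : Finset (Fin n) × Finset (Fin n) => p.1.card = k ∧ p.2.card = k)
        (fun p => ¬ V p)).trans
      (Equiv.subtypeEquivRight (fun p => by tauto))).symm
  have e2 : {p : Finset (Fin n) × Finset (Fin n) // p.1.card = k ∧ p.2.card = k ∧ V p} ≃
      {x : {p : Finset (Fin n) × Finset (Fin n) // p.1.card = k ∧ p.2.card = k} // V x.1} :=
    ((Equiv.subtypeSubtypeEquivSubtypeInter
        (fun p : Finset (Fin n) × Finset (Fin n) => p.1.card = k ∧ p.2.card = k)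
        (fun p => V p)).trans
      (Equiv.subtypeEquivRight (fun p => by tauto))).symm
  rw [Nat.card_congr e1, Nat.card_congr e2, Nat.add_comm, ← Nat.card_sum,
    Nat.card_congr (Equiv.sumCompl _), card_pairs]

lemma main_count (k : ℕ) (hk : 1 ≤ k) :
    Nat.card {p : (Fin k → Fin n) × (Fin k → Fin n) //
        StrictMono p.1 ∧ StrictMono p.2 ∧ ∀ i, p.1 i ≤ p.2 i} +
      n.choose (k - 1) * n.choose (k + 1) = n.choose k * n.choose k := by
  have hsplit := card_split (n := n) k
  have hbad : Nat.card {p : Finset (Fin n) × Finset (Fin n) //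
      p.1.card = k ∧ p.2.card = k ∧ V p} = n.choose (k - 1) * n.choose (k + 1) := by
    rw [Nat.card_congr (reflEquiv k hk), card_pairs]
  rw [Nat.card_congr (mainEquiv k)]
  omega

lemma prod_desc (N m : ℕ) (h : m ≤ N) :
    ∏ i ∈ Finset.range m, ((N : ℚ) - i) = N.factorial / (N - m).factorial := by
  induction m with
  | zero =>
    simp only [Finset.range_zero, Finset.prod_empty, Nat.sub_zero]
    rw [div_self (Nat.cast_ne_zero.mpr (Nat.factorial_ne_zero _))]
  | succ m ih =>
    rw [Finset.prod_range_succ, ih (le_trans (Nat.le_succ m) h)]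
    have h1 : N - m = (N - (m+1)) + 1 := by omega
    rw [h1, Nat.factorial_succ]
    have h2 : ((N - (m+1) : ℕ) : ℚ) + 1 = (N : ℚ) - m := by
      rw [Nat.cast_sub h]; push_cast; ring
    push_cast
    rw [h2]
    have hne : ((N - (m+1)).factorial : ℚ) ≠ 0 := Nat.cast_ne_zero.mpr (Nat.factorial_ne_zero _)
    have hne2 : (N : ℚ) - m ≠ 0 := by
      have : (m : ℚ) < N := by exact_mod_cast lt_of_lt_of_le (Nat.lt_succ_self m) h
      linarith
    field_simp

theorem final_arith (n k : ℕ) (hk : 1 ≤ k) (hkn : k ≤ n) :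
    (n.choose k : ℚ)^2 - (n.choose (k-1) : ℚ) * (n.choose (k+1) : ℚ) =
      (((n : ℚ) + 1) * ((n : ℚ) - k + 1) / ((k : ℚ) + 1)) *
        ∏ i ∈ Finset.range (k - 1), (((n : ℚ) - i) ^ 2 / ((k : ℚ) - i) ^ 2) := by
  obtain ⟨j, rfl⟩ : ∃ j, k = j + 1 := ⟨k - 1, by omega⟩
  rcases eq_or_lt_of_le hkn with rfl | hlt
  · -- k = n case
    rw [Nat.choose_self, Nat.choose_eq_zero_of_lt (Nat.lt_succ_self _)]
    have hone : ∏ i ∈ Finset.range (j + 1 - 1), (((j+1 : ℕ) : ℚ) - i) ^ 2 / (((j+1 : ℕ) : ℚ) - i) ^ 2 = 1 := by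
      apply Finset.prod_eq_one
      intro i hi
      simp only [Finset.mem_range] at hi
      apply div_self
      apply pow_ne_zero
      have : (i : ℚ) < (j : ℚ) + 1 := by exact_mod_cast Nat.lt_succ_of_lt hi
      push_cast
      linarith
    rw [hone]
    push_cast
    have : (j : ℚ) + 1 + 1 ≠ 0 := by positivity
    field_simp
    ring
  · -- k < n case
    obtain ⟨d, rfl⟩ : ∃ d, n = j + 1 + d + 1 := ⟨n - j - 2, by omega⟩
    have hr : j + 1 - 1 = j := by omega
    rw [hr]
    have hprod : ∏ i ∈ Finset.range j,
        ((((j + 1 + d + 1 : ℕ)) : ℚ) - i) ^ 2 / (((j + 1 : ℕ) : ℚ) - i) ^ 2 =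
        (((j+1+d+1).factorial : ℚ) / ((d+2).factorial : ℚ))^2 /
          (((j+1).factorial : ℚ))^2 := by
      rw [Finset.prod_div_distrib, Finset.prod_pow, Finset.prod_pow,
        prod_desc (j+1+d+1) j (by omega), prod_desc (j+1) j (by omega)]
      have e1 : j + 1 + d + 1 - j = d + 2 := by omega
      have e2 : j + 1 - j = 1 := by omega
      rw [e1, e2, Nat.factorial_one]
      norm_num
    push_cast at hprod ⊢
    rw [hprod]
    have c1 : (((j+1+d+1).choose (j+1)) : ℚ) =
        ((j+1+d+1).factorial : ℚ) / (((j+1).factorial : ℚ) * ((d+1).factorial : ℚ)) := by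
      have := Nat.cast_choose ℚ (show j+1 ≤ j+1+d+1 by omega)
      have e : j + 1 + d + 1 - (j+1) = d + 1 := by omega
      rw [e] at this
      exact_mod_cast this
    have c2 : (((j+1+d+1).choose j) : ℚ) =
        ((j+1+d+1).factorial : ℚ) / ((j.factorial : ℚ) * ((d+2).factorial : ℚ)) := by
      have := Nat.cast_choose ℚ (show j ≤ j+1+d+1 by omega)
      have e : j + 1 + d + 1 - j = d + 2 := by omega
      rw [e] at this
      exact_mod_cast this
    have c3 : (((j+1+d+1).choose (j+2)) : ℚ) =
        ((j+1+d+1).factorial : ℚ) / (((j+2).factorial : ℚ) * (d.factorial : ℚ)) := by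
      have := Nat.cast_choose ℚ (show j+2 ≤ j+1+d+1 by omega)
      have e : j + 1 + d + 1 - (j+2) = d := by omega
      rw [e] at this
      exact_mod_cast this
    have hc2 : j + 1 - 1 = j := hr
    rw [show j + 1 + 1 = j + 2 from rfl, hc2] at *
    push_cast [c1, c2, c3]
    have f1 : ((j+1).factorial : ℚ) = (j+1) * j.factorial := by
      rw [Nat.factorial_succ]; push_cast; ring
    have f2 : ((j+2).factorial : ℚ) = (j+2) * (j+1) * j.factorial := by
      rw [Nat.factorial_succ, Nat.factorial_succ]; push_cast; ring
    have f3 : ((d+1).factorial : ℚ) = (d+1) * d.factorial := by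
      rw [Nat.factorial_succ]; push_cast; ring
    have f4 : ((d+2).factorial : ℚ) = (d+2) * (d+1) * d.factorial := by
      rw [Nat.factorial_succ, Nat.factorial_succ]; push_cast; ring
    rw [f1, f2, f3, f4]
    have nz1 : (j.factorial : ℚ) ≠ 0 := Nat.cast_ne_zero.mpr (Nat.factorial_ne_zero _)
    have nz2 : (d.factorial : ℚ) ≠ 0 := Nat.cast_ne_zero.mpr (Nat.factorial_ne_zero _)
    have nz3 : ((j:ℚ)+1) ≠ 0 := by positivity
    have nz4 : ((j:ℚ)+2) ≠ 0 := by positivity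
    have nz5 : ((d:ℚ)+1) ≠ 0 := by positivity
    have nz6 : ((d:ℚ)+2) ≠ 0 := by positivity
    have nz7 : (((j+1+d+1).factorial : ℚ)) ≠ 0 := Nat.cast_ne_zero.mpr (Nat.factorial_ne_zero _)
    field_simp
    ring

end SSYT2


/-- The number of semi-standard Young tableaux of shape `k × 2` (pairs of
componentwise comparable `k`-subsets of `{1,…,n}`, encoded as pairs of strictly
increasing functions `Fin k → Fin n` with pointwise `≤`) is given by the
hook-content formula specialization. -/
theorem stmt_0 (n k : ℕ) (hk : 1 ≤ k) (hkn : k ≤ n) :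
    (Nat.card {p : (Fin k → Fin n) × (Fin k → Fin n) //
        StrictMono p.1 ∧ StrictMono p.2 ∧ ∀ i, p.1 i ≤ p.2 i} : ℚ) =
      (((n : ℚ) + 1) * ((n : ℚ) - k + 1) / ((k : ℚ) + 1)) *
        ∏ i ∈ Finset.range (k - 1), (((n : ℚ) - i) ^ 2 / ((k : ℚ) - i) ^ 2) := by
  have hmc := SSYT2.main_count (n := n) k hk
  have key := SSYT2.final_arith n k hk hkn
  have hcast : (Nat.card {p : (Fin k → Fin n) × (Fin k → Fin n) //
      StrictMono p.1 ∧ StrictMono p.2 ∧ ∀ i, p.1 i ≤ p.2 i} : ℚ) =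
      (n.choose k : ℚ)^2 - (n.choose (k-1) : ℚ) * (n.choose (k+1) : ℚ) := by
    have h2 := congrArg (fun x : ℕ => (x : ℚ)) hmc
    push_cast at h2
    linear_combination h2
  rw [hcast, key]
end

section
/- The linear forms L_I = Σ_{J ∈ C([n],r+1), J∩I=∅} s_{I∪J} (indexed by (k−r−1)-subsets I of [n]), viewed as linear forms in the variables s_K for k-subsets K, are linearly independent; hence they cut out a linear subspace of ℙ^{C(n,k)−1} of dimension C(n,k) − 1 − C(n,k−r−1). -/
open Finset in
/-- Counting lemma: the number of `k`-subsets `K` of `Fin n` containing a fixed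
`m`-set `C` and meeting a fixed `m`-set `P` in exactly `i` elements. -/
lemma count_lemma (n m k : ℕ) (hmk : m ≤ k) (P C : Finset (Fin n)) (hP : P.card = m) (hC : C.card = m)
    (i : ℕ) :
    ((Finset.powersetCard k (univ : Finset (Fin n))).filter
        (fun K => C ⊆ K ∧ (K ∩ P).card = i)).card =
    if (P ∩ C).card ≤ i ∧ i - (P ∩ C).card ≤ k - m then
      (m - (P ∩ C).card).choose (i - (P ∩ C).card) *
        (n - (2 * m - (P ∩ C).card)).choose (k - m - (i - (P ∩ C).card))
    else 0 := by
  classical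
  set j := (P ∩ C).card with hj
  -- facts about any K in the filter
  have hfact : ∀ K ∈ (Finset.powersetCard k (univ : Finset (Fin n))).filter
      (fun K => C ⊆ K ∧ (K ∩ P).card = i), j ≤ i ∧ m + i ≤ k + j := by
    intro K hK
    simp only [mem_filter, Finset.mem_powersetCard_univ] at hK
    obtain ⟨hKk, hCK, hKPi⟩ := hK
    have h1 : P ∩ C ⊆ K ∩ P := by
      intro x hx
      simp only [mem_inter] at hx ⊢
      exact ⟨hCK hx.2, hx.1⟩
    have hji : j ≤ i := hKPi ▸ card_le_card h1
    have h2 : (K ∩ P) ∩ C = P ∩ C := by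
      ext x
      simp only [mem_inter]
      exact ⟨fun h => ⟨h.1.2, h.2⟩, fun h => ⟨⟨hCK h.2, h.1⟩, h.2⟩⟩
    have h3 : ((K ∩ P) ∪ C).card + ((K ∩ P) ∩ C).card = (K ∩ P).card + C.card :=
      card_union_add_card_inter _ _
    have h4 : (K ∩ P) ∪ C ⊆ K := union_subset inter_subset_left hCK
    have h5 : ((K ∩ P) ∪ C).card ≤ k := hKk ▸ card_le_card h4
    rw [h2, hKPi, hC, ← hj] at h3
    omega
  by_cases h : j ≤ i ∧ i - j ≤ k - m
  · rw [if_pos h]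
    have hjm : j ≤ m := by
      have : P ∩ C ⊆ P := inter_subset_left
      have := card_le_card this
      omega
    have hPC : (P \ C).card = m - j := by
      have := card_sdiff_add_card_inter P C
      omega
    have hUn : (P ∪ C).card = 2 * m - j := by
      have := card_union_add_card_inter P C
      omega
    have hcompl : ((univ : Finset (Fin n)) \ (P ∪ C)).card = n - (2 * m - j) := by
      rw [card_sdiff_of_subset (subset_univ _), card_univ, Fintype.card_fin, hUn]
    have key : ((Finset.powersetCard k (univ : Finset (Fin n))).filter
        (fun K => C ⊆ K ∧ (K ∩ P).card = i)).card =
        ((Finset.powersetCard (i - j) (P \ C)) ×ˢ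
          (Finset.powersetCard (k - m - (i - j)) ((univ : Finset (Fin n)) \ (P ∪ C)))).card := by
      apply Finset.card_nbij' (fun K => (K ∩ (P \ C), K \ (P ∪ C)))
        (fun p => C ∪ p.1 ∪ p.2)
      · -- forward membership
        intro K hK
        simp only [Finset.mem_coe, mem_filter, Finset.mem_powersetCard_univ] at hK
        obtain ⟨hKk, hCK, hKPi⟩ := hK
        have h2 : (K ∩ P) ∩ C = P ∩ C := by
          ext x
          simp only [mem_inter]
          exact ⟨fun h => ⟨h.1.2, h.2⟩, fun h => ⟨⟨hCK h.2, h.1⟩, h.2⟩⟩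
        simp only [Finset.mem_coe, mem_product, Finset.mem_powersetCard]
        refine ⟨⟨fun x hx => ?_, ?_⟩, ⟨sdiff_subset_sdiff (Finset.subset_univ _) le_rfl, ?_⟩⟩
        · simp only [mem_inter, mem_sdiff] at hx ⊢
          exact ⟨hx.2.1, hx.2.2⟩
        · -- card (K ∩ (P \ C)) = i - j
          have he : K ∩ (P \ C) = (K ∩ P) \ C := by
            ext x; simp only [mem_inter, mem_sdiff]; tauto
          have := card_sdiff_add_card_inter (K ∩ P) C
          rw [he]
          rw [h2, hKPi, ← hj] at this
          omega
        · -- card (K \ (P ∪ C)) = k - m - (i - j)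
          have he : K ∩ (P ∪ C) = (K ∩ P) ∪ C := by
            ext x; simp only [mem_inter, mem_union]
            constructor
            · rintro ⟨hxK, hx | hx⟩
              · exact Or.inl ⟨hxK, hx⟩
              · exact Or.inr hx
            · rintro (⟨hxK, hx⟩ | hx)
              · exact ⟨hxK, Or.inl hx⟩
              · exact ⟨hCK hx, Or.inr hx⟩
          have h3 := card_union_add_card_inter (K ∩ P) C
          rw [h2, hKPi, hC, ← hj] at h3
          have h4 := card_sdiff_add_card_inter K (P ∪ C)
          rw [he, hKk] at h4
          have h6 := hfact K (by
            simp only [mem_filter, Finset.mem_powersetCard_univ]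
            exact ⟨hKk, hCK, hKPi⟩)
          omega
      · -- backward membership
        rintro ⟨S, T⟩ hp
        simp only [Finset.mem_coe, mem_product, Finset.mem_powersetCard] at hp
        obtain ⟨⟨hS, hScard⟩, hT, hTcard⟩ := hp
        have hTc : ∀ x ∈ T, x ∉ P ∧ x ∉ C := by
          intro x hx
          have := hT hx
          simp only [mem_sdiff, mem_union] at this
          tauto
        have hSc : ∀ x ∈ S, x ∈ P ∧ x ∉ C := by
          intro x hx
          have := hS hx
          simp only [mem_sdiff] at this
          tauto
        have hd1 : Disjoint C S := by
          rw [Finset.disjoint_right]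
          intro x hx
          exact (hSc x hx).2
        have hd2 : Disjoint (C ∪ S) T := by
          rw [Finset.disjoint_left]
          intro x hx
          simp only [mem_union] at hx
          intro hxT
          rcases hx with hx | hx
          · exact (hTc x hxT).2 hx
          · exact (hTc x hxT).1 (hSc x hx).1
        have hcard : (C ∪ S ∪ T).card = k := by
          rw [card_union_of_disjoint hd2, card_union_of_disjoint hd1, hC, hScard, hTcard]
          have hij : i - j ≤ m - j := hScard ▸ (hPC ▸ card_le_card hS)
          omega
        simp only [Finset.mem_coe, mem_filter, Finset.mem_powersetCard_univ]
        refine ⟨hcard, fun x hx => by simp only [mem_union]; tauto, ?_⟩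
        have he : (C ∪ S ∪ T) ∩ P = (P ∩ C) ∪ S := by
          ext x
          simp only [mem_union, mem_inter]
          constructor
          · rintro ⟨hx | hx, hxP⟩
            · rcases hx with hx | hx
              · exact Or.inl ⟨hxP, hx⟩
              · exact Or.inr hx
            · exact absurd hxP (hTc x hx).1
          · rintro (⟨hxP, hxC⟩ | hx)
            · exact ⟨Or.inl (Or.inl hxC), hxP⟩
            · exact ⟨Or.inl (Or.inr hx), (hSc x hx).1⟩
        rw [he, card_union_of_disjoint, hScard, ← hj]
        · omega
        · rw [Finset.disjoint_right]
          intro x hx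
          simp only [mem_inter]
          intro h'
          exact (hSc x hx).2 h'.2
      · -- left inverse
        intro K hK
        simp only [Finset.mem_coe, mem_filter, Finset.mem_powersetCard_univ] at hK
        obtain ⟨hKk, hCK, hKPi⟩ := hK
        ext x
        simp only [mem_union, mem_inter, mem_sdiff, mem_union]
        constructor
        · rintro ((hx | hx) | hx)
          · exact hCK hx
          · exact hx.1
          · exact hx.1
        · intro hx
          by_cases hxC : x ∈ C
          · exact Or.inl (Or.inl hxC)
          · by_cases hxP : x ∈ P
            · exact Or.inl (Or.inr ⟨hx, hxP, hxC⟩)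
            · exact Or.inr ⟨hx, by tauto⟩
      · -- right inverse
        rintro ⟨S, T⟩ hp
        simp only [Finset.mem_coe, mem_product, Finset.mem_powersetCard] at hp
        obtain ⟨⟨hS, hScard⟩, hT, hTcard⟩ := hp
        have hTc : ∀ x ∈ T, x ∉ P ∧ x ∉ C := by
          intro x hx
          have := hT hx
          simp only [mem_sdiff, mem_union] at this
          tauto
        have hSc : ∀ x ∈ S, x ∈ P ∧ x ∉ C := by
          intro x hx
          have := hS hx
          simp only [mem_sdiff] at this
          tauto
        have e1 : (C ∪ S ∪ T) ∩ (P \ C) = S := by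
          ext x
          simp only [mem_inter, mem_sdiff, mem_union]
          constructor
          · rintro ⟨(hx | hx) | hx, hxP, hxC⟩
            · exact absurd hx hxC
            · exact hx
            · exact absurd hxP (hTc x hx).1
          · intro hx
            exact ⟨Or.inl (Or.inr hx), (hSc x hx).1, (hSc x hx).2⟩
        have e2 : (C ∪ S ∪ T) \ (P ∪ C) = T := by
          ext x
          simp only [mem_sdiff, mem_union]
          constructor
          · rintro ⟨(hx | hx) | hx, hx2⟩
            · exact absurd (Or.inr hx) hx2
            · exact absurd (Or.inl (hSc x hx).1) hx2
            · exact hx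
          · intro hx
            exact ⟨Or.inr hx, by have := hTc x hx; tauto⟩
        show ((C ∪ S ∪ T) ∩ (P \ C), (C ∪ S ∪ T) \ (P ∪ C)) = (S, T)
        rw [e1, e2]
    rw [key, card_product, card_powersetCard, card_powersetCard, hPC, hcompl]
  · rw [if_neg h]
    rw [card_eq_zero, filter_eq_empty_iff]
    intro K hK hmem
    have := hfact K (by simp only [mem_filter]; exact ⟨hK, hmem⟩)
    omega

/-- The momentum-conservation linear form `L_I`, indexed by a
`(k−r−1)`-subset `I` of `[n]`: the sum of the variables `s_{I∪J}` over all
`(r+1)`-subsets `J` disjoint from `I`, viewed as a functional on the space of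
vectors `s` indexed by `k`-subsets. -/
noncomputable def momentumForm (n k r : ℕ) (hrk : r + 1 ≤ k)
    (I : {I : Finset (Fin n) // I.card = k - r - 1}) :
    ({K : Finset (Fin n) // K.card = k} → ℚ) → ℚ :=
  fun s => ∑ J : {J : Finset (Fin n) // J.card = r + 1},
    if h : Disjoint I.1 J.1 then
      s ⟨I.1 ∪ J.1, by rw [Finset.card_union_of_disjoint h, I.2, J.2]; omega⟩
    else 0

open Finset

/-- The linear forms `L_I = Σ_{J} s_{I∪J}` are linearly independent; hence
they cut out a linear subspace of codimension `C(n, k−r−1)`, i.e. the span of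
these forms has dimension `C(n, k−r−1)`. -/
theorem stmt_12 (n k r : ℕ) (hrk : r + 1 ≤ k) (h2 : 2 * k ≤ n + r) :
    LinearIndependent ℚ (momentumForm n k r hrk) ∧
    Module.finrank ℚ (Submodule.span ℚ (Set.range (momentumForm n k r hrk))) =
      n.choose (k - r - 1) := by
  classical
  set m := k - r - 1 with hm
  have hmk : m ≤ k := by omega
  have hmn : m + k ≤ n := by omega
  have hkm : k - m = r + 1 := by omega
  -- the key claim
  have key : ∀ g : {I : Finset (Fin n) // I.card = k - r - 1} → ℚ,
      ∑ I, g I • momentumForm n k r hrk I = 0 → ∀ I₀, g I₀ = 0 := by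
    intro g hg I₀
    -- the matrix of counts
    set Nq : ℕ → ℕ → ℚ := fun i j =>
      ((if j ≤ i ∧ i - j ≤ k - m then
        (m - j).choose (i - j) * (n - (2 * m - j)).choose (k - m - (i - j)) else 0 : ℕ) : ℚ)
      with hNq
    set M : Matrix (Fin (m+1)) (Fin (m+1)) ℚ := fun p q => Nq q.1 p.1 with hM
    have htri : M.BlockTriangular id := by
      intro p q hlt
      simp only [hM, hNq]
      rw [if_neg]
      · norm_num
      · simp only [id] at hlt
        omega
    have hdiag : ∀ p : Fin (m+1), M p p = (((n - (2 * m - p.1)).choose (k - m) : ℕ) : ℚ) := by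
      intro p
      simp only [hM, hNq]
      rw [if_pos (by omega)]
      simp
    have hdet : IsUnit M.det := by
      rw [Matrix.det_of_upperTriangular htri]
      rw [isUnit_iff_ne_zero]
      apply Finset.prod_ne_zero_iff.mpr
      intro p _
      rw [hdiag p]
      have hpos : 0 < (n - (2 * m - p.1)).choose (k - m) := by
        apply Nat.choose_pos
        omega
      exact_mod_cast hpos.ne'
    set α : Fin (m+1) → ℚ := M⁻¹.mulVec (Pi.single (Fin.last m) 1) with hαdef
    have hα : ∀ p : Fin (m+1), ∑ q, M p q * α q = if p = Fin.last m then 1 else 0 := by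
      have h1 : M.mulVec α = Pi.single (Fin.last m) 1 := by
        rw [hαdef, Matrix.mulVec_mulVec, Matrix.mul_nonsing_inv _ hdet, Matrix.one_mulVec]
      intro p
      have := congrFun h1 p
      simpa [Matrix.mulVec, dotProduct, Pi.single_apply] using this
    set A : ℕ → ℚ := fun i => if h : i < m + 1 then α ⟨i, h⟩ else 0 with hA
    set s₀ : {K : Finset (Fin n) // K.card = k} → ℚ :=
      fun K => A ((K.1 ∩ I₀.1).card) with hs₀
    have main : ∀ I : {I : Finset (Fin n) // I.card = k - r - 1},
        momentumForm n k r hrk I s₀ = if I = I₀ then 1 else 0 := by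
      intro I
      have hIm : I.1.card = m := I.2
      have hI₀m : I₀.1.card = m := I₀.2
      set j := (I₀.1 ∩ I.1).card with hjdef
      have hjm : j ≤ m := by
        have : I₀.1 ∩ I.1 ⊆ I₀.1 := Finset.inter_subset_left
        have := Finset.card_le_card this
        omega
      -- step 1: rewrite as a sum over k-sets containing I
      have step1 : momentumForm n k r hrk I s₀ =
          ∑ K ∈ (Finset.powersetCard k (univ : Finset (Fin n))).filter
            (fun K => I.1 ⊆ K), A ((K ∩ I₀.1).card) := by
        simp only [momentumForm, hs₀]
        rw [← Finset.sum_subtype (Finset.powersetCard (r+1) (univ : Finset (Fin n)))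
          (fun J => by simp [Finset.mem_powersetCard_univ])
          (fun J => if h : Disjoint I.1 J then A (((I.1 ∪ J) ∩ I₀.1).card) else 0)]
        simp only [dite_eq_ite]
        rw [← Finset.sum_filter]
        apply Finset.sum_nbij' (i := fun J => I.1 ∪ J) (j := fun K => K \ I.1)
        · intro J hJ
          simp only [Finset.mem_filter, Finset.mem_powersetCard_univ] at hJ ⊢
          constructor
          · rw [Finset.card_union_of_disjoint hJ.2, hIm, hJ.1]; omega
          · exact Finset.subset_union_left
        · intro K hK
          simp only [Finset.mem_filter, Finset.mem_powersetCard_univ] at hK ⊢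
          constructor
          · rw [Finset.card_sdiff_of_subset hK.2, hK.1, hIm]; omega
          · exact Finset.disjoint_sdiff
        · intro J hJ
          simp only [Finset.mem_filter] at hJ
          exact Finset.union_sdiff_cancel_left hJ.2
        · intro K hK
          simp only [Finset.mem_filter] at hK
          exact Finset.union_sdiff_of_subset hK.2
        · intro J hJ
          rfl
      rw [step1]
      -- step 2: fiberwise over the intersection size with I₀
      rw [← Finset.sum_fiberwise_of_maps_to (g := fun K => (K ∩ I₀.1).card)
        (t := Finset.range (m+1)) (fun K _ => by
          simp only [Finset.mem_range]
          have : K ∩ I₀.1 ⊆ I₀.1 := Finset.inter_subset_right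
          have := Finset.card_le_card this
          omega)]
      have inner : ∀ i ∈ Finset.range (m+1),
          ∑ K ∈ ((Finset.powersetCard k (univ : Finset (Fin n))).filter
              (fun K => I.1 ⊆ K)).filter (fun K => (K ∩ I₀.1).card = i),
            A ((K ∩ I₀.1).card) = Nq i j * A i := by
        intro i hi
        rw [Finset.sum_congr rfl (fun K hK => by
          simp only [Finset.mem_filter] at hK
          rw [hK.2])]
        rw [Finset.sum_const, nsmul_eq_mul]
        congr 1
        rw [Finset.filter_filter]
        rw [count_lemma n m k hmk I₀.1 I.1 hI₀m hIm i]
      rw [Finset.sum_congr rfl inner]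
      -- step 3: identify with the matrix-vector product
      have step3 : ∑ i ∈ Finset.range (m+1), Nq i j * A i =
          ∑ q : Fin (m+1), M ⟨j, by omega⟩ q * α q := by
        rw [← Fin.sum_univ_eq_sum_range (fun i => Nq i j * A i) (m+1)]
        apply Finset.sum_congr rfl
        intro q _
        have hAq : A q.1 = α q := by
          simp only [hA]
          rw [dif_pos q.isLt, Fin.eta]
        rw [hAq]
      rw [step3, hα]
      -- step 4: identify the indicator
      congr 1
      simp only [eq_iff_iff]
      rw [Fin.ext_iff]
      simp only [Fin.val_last]
      constructor
      · intro hjm'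
        have h1 : I₀.1 ∩ I.1 = I₀.1 :=
          Finset.eq_of_subset_of_card_le Finset.inter_subset_left
            (by rw [← hjdef]; omega)
        have h2 : I₀.1 ⊆ I.1 := by
          rw [← h1]; exact Finset.inter_subset_right
        have h3 : I₀.1 = I.1 := Finset.eq_of_subset_of_card_le h2 (by omega)
        exact Subtype.ext h3.symm
      · intro hII
        rw [hjdef, hII, Finset.inter_self]
        exact hI₀m
    have := congrFun hg s₀
    simp only [Finset.sum_apply, Pi.smul_apply, smul_eq_mul, Pi.zero_apply] at this
    rw [Finset.sum_congr rfl (fun I _ => by rw [main I])] at this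
    simp only [mul_ite, mul_one, mul_zero, Finset.sum_ite_eq', Finset.mem_univ,
      if_true] at this
    exact this
  have li : LinearIndependent ℚ (momentumForm n k r hrk) :=
    Fintype.linearIndependent_iff.mpr key
  refine ⟨li, ?_⟩
  rw [finrank_span_eq_card li, Fintype.card_finset_len, Fintype.card_fin]
end
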